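/- Let R be a commutative Noetherian ring and K ∈ D^b_coh(R) a bounded complex with finitely generated cohomology. Then for each i, the set S^i(K) = { x ∈ Spec(R) : H^i(K ⊗^L_R κ(x)) ≠ 0 } is Zariski closed in Spec(R). -/

import Mathlib

open CategoryTheory

section MatrixAux

open Matrix

variable {K : Type*} [Field K] {m n : Type*} [Fintype m] [Fintype n]

omit [Fintype n] in
lemma aux_submatrix_left [DecidableEq m] {s : Type*} [Fintype s] (A : Matrix m n K) (ri : s → m) :
    A.submatrix ri id = (1 : Matrix m m K).submatrix ri id * A := by
  ext a j
  simp [Matrix.mul_apply, Matrix.one_apply, Matrix.submatrix_apply]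

omit [Fintype m] in
lemma aux_submatrix_right [DecidableEq n] {t : Type*} [Fintype t] (A : Matrix m n K) (ci : t → n) :
    A.submatrix id ci = A * (1 : Matrix n n K).submatrix id ci := by
  ext a j
  simp [Matrix.mul_apply, Matrix.one_apply, Matrix.submatrix_apply]

lemma aux_rank_submatrix_le [DecidableEq m] [DecidableEq n] {s t : Type*} [Fintype s] [Fintype t]
    (A : Matrix m n K) (ri : s → m) (ci : t → n) :
    (A.submatrix ri ci).rank ≤ A.rank := by
  have h : A.submatrix ri ci = (1 : Matrix m m K).submatrix ri id * A
      * (1 : Matrix n n K).submatrix id ci := by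
    rw [← aux_submatrix_left]
    have := aux_submatrix_right (A.submatrix ri (id : n → n)) ci
    simpa using this
  rw [h]
  exact le_trans (Matrix.rank_mul_le _ _) (by
    exact le_trans (min_le_left _ _) (Matrix.rank_mul_le_right _ _))

lemma aux_exists_linIndep_rows (A : Matrix m n K) (s : ℕ) (h : s ≤ A.rank) :
    ∃ ri : Fin s → m, LinearIndependent K (fun j => A (ri j)) := by
  classical
  rw [Matrix.rank_eq_finrank_span_row] at h
  obtain ⟨t, hts, hspan, hti⟩ := exists_linearIndependent K (Set.range A)
  have htfin : t.Finite := by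
    have : Module.Finite K (n → K) := inferInstance
    exact hti.setFinite
  letI : Fintype t := htfin.fintype
  have hcard : s ≤ Fintype.card t := by
    have h1 : Module.finrank K (Submodule.span K t) = t.toFinset.card :=
      finrank_span_set_eq_card hti
    change s ≤ Module.finrank K (Submodule.span K (Set.range A)) at h
    rw [← hspan] at h
    rw [h1, Set.toFinset_card] at h
    exact h
  obtain ⟨emb⟩ : Nonempty (Fin s ↪ t) :=
    Function.Embedding.nonempty_of_card_le (by simpa using hcard)
  have hv : ∀ j : Fin s, ((emb j : n → K)) ∈ Set.range A := fun j => hts (emb j).2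
  choose ri hri using fun j => hv j
  refine ⟨ri, ?_⟩
  have : (fun j => A (ri j)) = (fun x : t => (x : n → K)) ∘ emb := by
    funext j; simp [hri]
  rw [this]
  exact hti.comp emb emb.injective

theorem aux_rank_le_iff_minors [DecidableEq m] [DecidableEq n] (A : Matrix m n K) (r : ℕ) :
    A.rank ≤ r ↔ ∀ (ri : Fin (r + 1) → m) (ci : Fin (r + 1) → n),
      (A.submatrix ri ci).det = 0 := by
  constructor
  · intro h ri ci
    by_contra hdet
    have hu : IsUnit (A.submatrix ri ci) :=
      (Matrix.isUnit_iff_isUnit_det _).2 (isUnit_iff_ne_zero.2 hdet)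
    have := Matrix.rank_of_isUnit _ hu
    have hle := aux_rank_submatrix_le A ri ci
    rw [this] at hle
    simp [Fintype.card_fin] at hle
    omega
  · intro h
    by_contra hrank
    push_neg at hrank
    have hs : r + 1 ≤ A.rank := hrank
    obtain ⟨ri, hri⟩ := aux_exists_linIndep_rows A (r + 1) hs
    have hB : (A.submatrix ri id).rank = r + 1 := by
      have : LinearIndependent K (A.submatrix ri id) := hri
      have h' := this.rank_matrix
      rwa [Fintype.card_fin] at h'
    have hBT : (A.submatrix ri id)ᵀ.rank = r + 1 := by
      rw [Matrix.rank_transpose]; exact hB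
    obtain ⟨ci, hci⟩ := aux_exists_linIndep_rows (A.submatrix ri id)ᵀ (r + 1) hBT.ge
    have hsq : LinearIndependent K (fun j => (A.submatrix ri ci)ᵀ j) := by
      convert hci using 1
      rfl
    have hu : IsUnit ((A.submatrix ri ci)ᵀ) :=
      Matrix.linearIndependent_rows_iff_isUnit.1 hsq
    have hdet : (A.submatrix ri ci).det ≠ 0 := by
      have := (Matrix.isUnit_iff_isUnit_det _).1 hu
      rw [Matrix.det_transpose] at this
      exact this.ne_zero
    exact hdet (h ri ci)

end MatrixAux

lemma aux_range_eq_ker_iff {k U V W : Type*} [Field k] [AddCommGroup U] [Module k U]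
    [AddCommGroup V] [Module k V] [AddCommGroup W] [Module k W] [FiniteDimensional k V]
    (f : U →ₗ[k] V) (g : V →ₗ[k] W) (h : ∀ u, g (f u) = 0) :
    LinearMap.range f = LinearMap.ker g ↔
      Module.finrank k (LinearMap.range f) + Module.finrank k (LinearMap.range g) =
        Module.finrank k V := by
  have hle : LinearMap.range f ≤ LinearMap.ker g := by
    rintro v ⟨u, rfl⟩; exact h u
  have hrn : Module.finrank k (LinearMap.range g) + Module.finrank k (LinearMap.ker g) =
      Module.finrank k V := LinearMap.finrank_range_add_finrank_ker g
  constructor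
  · intro he; rw [he]; omega
  · intro he
    refine Submodule.eq_of_le_of_finrank_le hle ?_
    have h2 := Submodule.finrank_mono hle
    omega

/-- The set of `s × s` minors of a matrix. -/
def minorsSet {R : Type} [CommRing R] {ι ι' : Type*} [Fintype ι] [Fintype ι']
    (M : Matrix ι ι' R) (s : ℕ) : Set R :=
  Set.range (fun p : ((Fin s → ι) × (Fin s → ι')) => (M.submatrix p.1 p.2).det)

/-- The residue field `κ(x)` of a point `x ∈ Spec R`. -/
noncomputable abbrev resField (R : Type) [CommRing R] (p : PrimeSpectrum R) : Type :=
  IsLocalRing.ResidueField (Localization.AtPrime p.asIdeal)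

/-- The canonical map `R →+* κ(x)`. -/
noncomputable def resHom (R : Type) [CommRing R] (p : PrimeSpectrum R) :
    R →+* resField R p :=
  (IsLocalRing.residue (Localization.AtPrime p.asIdeal)).comp
    (algebraMap R (Localization.AtPrime p.asIdeal))

lemma resHom_eq_zero_iff {R : Type} [CommRing R] (x : PrimeSpectrum R) (a : R) :
    resHom R x a = 0 ↔ a ∈ x.asIdeal := by
  have : resHom R x a = IsLocalRing.residue (Localization.AtPrime x.asIdeal)
      (algebraMap R (Localization.AtPrime x.asIdeal) a) := rfl
  rw [this, IsLocalRing.residue_eq_zero_iff]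
  exact IsLocalization.AtPrime.to_map_mem_maximal_iff (Localization.AtPrime x.asIdeal) x.asIdeal a

lemma mem_zeroLocus_minors {R : Type} [CommRing R] {ι ι' : Type*} [Fintype ι] [Fintype ι']
    [DecidableEq ι] [DecidableEq ι'] (M : Matrix ι ι' R) (r : ℕ) (x : PrimeSpectrum R) :
    x ∈ PrimeSpectrum.zeroLocus (minorsSet M (r + 1)) ↔ (M.map (resHom R x)).rank ≤ r := by
  rw [PrimeSpectrum.mem_zeroLocus, aux_rank_le_iff_minors]
  constructor
  · intro h ri ci
    have hm : (M.submatrix ri ci).det ∈ x.asIdeal := h ⟨(ri, ci), rfl⟩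
    have h0 : resHom R x ((M.submatrix ri ci).det) = 0 := (resHom_eq_zero_iff x _).2 hm
    rw [RingHom.map_det] at h0
    simpa [Matrix.submatrix_map] using h0
  · rintro h a ⟨⟨ri, ci⟩, rfl⟩
    apply (resHom_eq_zero_iff x _).1
    rw [RingHom.map_det]
    simpa [Matrix.submatrix_map] using h ri ci

/-- The derived fiber `K ⊗^L_R κ(x)` of a complex `K` of flat (e.g. finite free)
modules, computed termwise. -/
noncomputable def fiberCx (R : Type) [CommRing R] (K : CochainComplex (ModuleCat R) ℤ)
    (p : PrimeSpectrum R) : CochainComplex (ModuleCat (resField R p)) ℤ :=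
  ((ModuleCat.extendScalars (resHom R p)).mapHomologicalComplex _).obj K

/-- Let `R` be Noetherian and `K ∈ D^b_coh(R)`, represented by a bounded above complex
of finite free modules with bounded, finitely generated cohomology. Then for each `i`
the cohomology jump locus `S^i(K) = { x ∈ Spec R : H^i(K ⊗^L_R κ(x)) ≠ 0 }` is
Zariski closed in `Spec R`. -/
theorem jumpLocus_isClosed (R : Type) [CommRing R] [IsNoetherianRing R]
    (K : CochainComplex (ModuleCat R) ℤ)
    (hfree : ∀ i, Module.Free R (K.X i)) (hfin : ∀ i, Module.Finite R (K.X i))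
    (b : ℤ) (hbddAbove : ∀ i, b < i → Limits.IsZero (K.X i))
    (a : ℤ) (hcohBdd : ∀ i, i < a → Limits.IsZero (K.homology i))
    (hcohFin : ∀ i, Module.Finite R (K.homology i))
    (i : ℤ) :
    IsClosed {x : PrimeSpectrum R | ¬ Limits.IsZero ((fiberCx R K x).homology i)} := by
  classical
  haveI := hfree (i - 1); haveI := hfree i; haveI := hfree (i + 1)
  haveI := hfin (i - 1); haveI := hfin i; haveI := hfin (i + 1)
  set ι₁ := Module.Free.ChooseBasisIndex R (K.X (i - 1)) with hι₁
  set ι₂ := Module.Free.ChooseBasisIndex R (K.X i) with hι₂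
  set ι₃ := Module.Free.ChooseBasisIndex R (K.X (i + 1)) with hι₃
  haveI : Fintype ι₁ := inferInstanceAs (Fintype (Module.Free.ChooseBasisIndex R (K.X (i - 1))))
  haveI : Fintype ι₂ := inferInstanceAs (Fintype (Module.Free.ChooseBasisIndex R (K.X i)))
  haveI : Fintype ι₃ := inferInstanceAs (Fintype (Module.Free.ChooseBasisIndex R (K.X (i + 1))))
  let b1 : Module.Basis ι₁ R (K.X (i - 1)) := Module.Free.chooseBasis R (K.X (i - 1))
  let b2 : Module.Basis ι₂ R (K.X i) := Module.Free.chooseBasis R (K.X i)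
  let b3 : Module.Basis ι₃ R (K.X (i + 1)) := Module.Free.chooseBasis R (K.X (i + 1))
  let M1 : Matrix ι₂ ι₁ R := LinearMap.toMatrix b1 b2 (K.d (i - 1) i).hom
  let M2 : Matrix ι₃ ι₂ R := LinearMap.toMatrix b2 b3 (K.d i (i + 1)).hom
  set n := Fintype.card ι₂ with hn
  have key : ∀ x : PrimeSpectrum R,
      (¬ Limits.IsZero ((fiberCx R K x).homology i)) ↔
        (M1.map (resHom R x)).rank + (M2.map (resHom R x)).rank < n := by
    intro x
    letI : Algebra R (resField R x) := (resHom R x).toAlgebra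
    set k := resField R x with hk
    set F := fiberCx R K x with hF
    haveI : Module.Finite k (F.X i) :=
      Module.Finite.of_basis (Algebra.TensorProduct.basis k b2)
    have hzero : ∀ u, (F.d i (i + 1)) ((F.d (i - 1) i) u) = 0 := by
      intro u
      have hdd := F.d_comp_d (i - 1) i (i + 1)
      have : (F.d i (i + 1)) ((F.d (i - 1) i) u) = (F.d (i - 1) i ≫ F.d i (i + 1)) u := rfl
      rw [this, hdd]
      rfl
    have e1 : F.ExactAt i ↔ Limits.IsZero (F.homology i) :=
      HomologicalComplex.exactAt_iff_isZero_homology F i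
    have e2 : F.ExactAt i ↔ (F.sc' (i - 1) i (i + 1)).Exact :=
      F.exactAt_iff' (i - 1) i (i + 1) (by simp) (by simp)
    have e3 : (F.sc' (i - 1) i (i + 1)).Exact ↔
        LinearMap.range (F.d (i - 1) i).hom = LinearMap.ker (F.d i (i + 1)).hom :=
      ShortComplex.moduleCat_exact_iff_range_eq_ker _
    have e4 : LinearMap.range (F.d (i - 1) i).hom = LinearMap.ker (F.d i (i + 1)).hom ↔
        Module.finrank k (LinearMap.range (F.d (i - 1) i).hom) +
          Module.finrank k (LinearMap.range (F.d i (i + 1)).hom) = Module.finrank k (F.X i) :=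
      aux_range_eq_ker_iff _ _ hzero
    have hd1 : ((F.d (i - 1) i).hom : F.X (i - 1) →ₗ[k] F.X i) =
        LinearMap.baseChange k (K.d (i - 1) i).hom := rfl
    have hd2 : ((F.d i (i + 1)).hom : F.X i →ₗ[k] F.X (i + 1)) =
        LinearMap.baseChange k (K.d i (i + 1)).hom := rfl
    have halg : algebraMap R k = resHom R x := rfl
    have hr1 : Module.finrank k (LinearMap.range (F.d (i - 1) i).hom) =
        (M1.map (resHom R x)).rank := by
      rw [Matrix.rank_eq_finrank_range_toLin (M1.map (resHom R x))
        (Algebra.TensorProduct.basis k b2) (Algebra.TensorProduct.basis k b1)]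
      rw [← halg, ← LinearMap.toMatrix_baseChange, Matrix.toLin_toMatrix, hd1]
      rfl
    have hr2 : Module.finrank k (LinearMap.range (F.d i (i + 1)).hom) =
        (M2.map (resHom R x)).rank := by
      rw [Matrix.rank_eq_finrank_range_toLin (M2.map (resHom R x))
        (Algebra.TensorProduct.basis k b3) (Algebra.TensorProduct.basis k b2)]
      rw [← halg, ← LinearMap.toMatrix_baseChange, Matrix.toLin_toMatrix, hd2]
      rfl
    have hmid : Module.finrank k (F.X i) = n := by
      exact Module.finrank_eq_card_basis (Algebra.TensorProduct.basis k b2)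
    have hbound : (M1.map (resHom R x)).rank + (M2.map (resHom R x)).rank ≤ n := by
      have hM : (M2.map (resHom R x)) * (M1.map (resHom R x)) = 0 := by
        have hc : M2 * M1 = 0 := by
          have hz0 : ∀ u, (K.d i (i + 1)) ((K.d (i - 1) i) u) = 0 := by
            intro u
            have hdd := K.d_comp_d (i - 1) i (i + 1)
            have heq : (K.d i (i + 1)) ((K.d (i - 1) i) u) =
                (K.d (i - 1) i ≫ K.d i (i + 1)) u := rfl
            rw [heq, hdd]
            rfl
          have h0 : ((K.d i (i + 1)).hom.comp
              (K.d (i - 1) i).hom) = 0 := LinearMap.ext fun u => hz0 u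
          have hcomp := LinearMap.toMatrix_comp b1 b2 b3
            (K.d i (i + 1)).hom (K.d (i - 1) i).hom
          rw [h0, map_zero] at hcomp
          exact hcomp.symm
        rw [← Matrix.map_mul, hc]
        exact Matrix.map_zero _ (map_zero _)
      rw [hn, Nat.add_comm]
      exact Matrix.rank_add_rank_le_card_of_mul_eq_zero hM
    rw [← e1, e2, e3, e4, hr1, hr2, hmid]
    omega
  have hset : {x : PrimeSpectrum R | ¬ Limits.IsZero ((fiberCx R K x).homology i)} =
      ⋃ r : Fin n, (PrimeSpectrum.zeroLocus (minorsSet M1 (r.1 + 1)) ∩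
        PrimeSpectrum.zeroLocus (minorsSet M2 ((n - 1 - r.1) + 1))) := by
    ext x
    rw [Set.mem_setOf_eq, key x, Set.mem_iUnion]
    constructor
    · intro h
      refine ⟨⟨(M1.map (resHom R x)).rank, by omega⟩, ?_, ?_⟩
      · exact (mem_zeroLocus_minors M1 _ x).2 (le_refl _)
      · have h2 : (M2.map (resHom R x)).rank ≤ n - 1 - (M1.map (resHom R x)).rank := by
          omega
        exact (mem_zeroLocus_minors M2 (n - 1 - (M1.map (resHom R x)).rank) x).2 h2
    · rintro ⟨r, hr1, hr2⟩
      have h1 := (mem_zeroLocus_minors M1 r.1 x).1 hr1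
      have h2 := (mem_zeroLocus_minors M2 (n - 1 - r.1) x).1 hr2
      have := r.2
      omega
  rw [hset]
  exact isClosed_iUnion_of_finite (fun r => IsClosed.inter
    (PrimeSpectrum.isClosed_zeroLocus _) (PrimeSpectrum.isClosed_zeroLocus _))
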